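/- Let K be a field of characteristic 0, r, s ∈ K*, and σ the automorphism of K[h,h⁻¹] with σ(h) = r·h. There exists a nonzero p ∈ K[h,h⁻¹] and an integer n ≥ 1 with σ(p) = s^{-n}·p if and only if there exist integers α, β with α ≠ 0 such that s^α · r^β = 1. -/

import Mathlib

open LaurentPolynomial

lemma sigma_C {K : Type*} [Field K] (σ : LaurentPolynomial K ≃ₐ[K] LaurentPolynomial K)
    (a : K) : σ (C a) = C a := by
  rw [C_eq_algebraMap]; exact σ.commutes a

lemma sigma_T_int {K : Type*} [Field K] (r : K) (hr : r ≠ 0)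
    (σ : LaurentPolynomial K ≃ₐ[K] LaurentPolynomial K)
    (hσ : σ (T 1) = C r * T 1) (k : ℤ) :
    σ (T k) = C (r ^ k) * T k := by
  have hinv : σ (T (-1)) = C r⁻¹ * T (-1) := by
    have h1 : σ (T 1) * σ (T (-1)) = 1 := by
      rw [← map_mul, ← T_add]; simp
    have h2 : (C r⁻¹ * T (-1)) * σ (T 1) = 1 := by
      rw [hσ, mul_mul_mul_comm, ← map_mul, ← T_add, inv_mul_cancel₀ hr]
      simp
    exact (left_inv_eq_right_inv h2 h1).symm
  induction k using Int.induction_on with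
  | zero => simp
  | succ n ih =>
      rw [T_add, map_mul, ih, hσ, zpow_add₀ hr, zpow_one, map_mul]
      ring
  | pred n ih =>
      rw [show (-(n:ℤ) - 1) = (-n) + (-1) by ring, T_add, map_mul, ih, hinv,
        zpow_add₀ hr, map_mul, zpow_neg_one]
      ring

lemma C_mul_apply {K : Type*} [Field K] (c : K) (p : LaurentPolynomial K) (k : ℤ) :
    (C c * p).coeff k = c * p.coeff k := by
  rw [C_eq_algebraMap, ← Algebra.smul_def]
  rfl

/-- Principal eigenvectors exist (i.e. there are `p ≠ 0` and `n ≥ 1` with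
`σ(p) = s^{-n}·p`, where `σ(h) = r·h`) if and only if there exist integers
`α ≠ 0` and `β` with `s^α · r^β = 1`. -/
theorem principal_eigenvector_iff {K : Type*} [Field K] [CharZero K]
    (r s : K) (hr : r ≠ 0) (hs : s ≠ 0)
    (σ : LaurentPolynomial K ≃ₐ[K] LaurentPolynomial K)
    (hσ : σ (T 1) = C r * T 1) :
    (∃ p : LaurentPolynomial K, p ≠ 0 ∧ ∃ n : ℕ, 1 ≤ n ∧ σ p = C ((s ^ n)⁻¹) * p) ↔
      ∃ α β : ℤ, α ≠ 0 ∧ s ^ α * r ^ β = 1 := by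
  constructor
  · rintro ⟨p, hp, n, hn, heq⟩
    obtain ⟨k, hk⟩ := Finsupp.support_nonempty_iff.mpr (mt AddMonoidAlgebra.coeff_eq_zero.mp hp)
    have hpk : p.coeff k ≠ 0 := Finsupp.mem_support_iff.mp hk
    have hsingle : ∀ m : ℤ, ∀ a : K, σ (AddMonoidAlgebra.single m a) = AddMonoidAlgebra.single m (a * r ^ m) := by
      intro m a
      rw [single_eq_C_mul_T, map_mul, sigma_T_int r hr σ hσ, sigma_C,
        ← mul_assoc, ← map_mul, ← single_eq_C_mul_T]
    have key : ∀ q : LaurentPolynomial K, ∀ k : ℤ, (σ q).coeff k = q.coeff k * r ^ k := by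
      intro q
      induction q using AddMonoidAlgebra.induction_linear with
      | zero => simp
      | add f g hf hg =>
          intro k
          rw [map_add, AddMonoidAlgebra.coeff_add, AddMonoidAlgebra.coeff_add, Finsupp.add_apply, Finsupp.add_apply, hf, hg]
          ring
      | single m a =>
          intro k
          rw [hsingle m a]
          simp only [AddMonoidAlgebra.coeff_single]
          rw [Finsupp.single_apply, Finsupp.single_apply]
          split_ifs with h
          · subst h; rfl
          · simp
    have key2 := key p k
    rw [heq, C_mul_apply] at key2
    have hrk : r ^ k = (s ^ n)⁻¹ := by
      refine mul_left_cancel₀ hpk ?_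
      rw [← key2]; ring
    refine ⟨n, k, by exact_mod_cast Nat.one_le_iff_ne_zero.mp hn, ?_⟩
    rw [zpow_natCast, hrk, mul_inv_cancel₀ (pow_ne_zero n hs)]
  · rintro ⟨α, β, hα, hαβ⟩
    obtain ⟨α, β, hαpos, hαβ⟩ : ∃ α β : ℤ, 0 < α ∧ s ^ α * r ^ β = 1 := by
      rcases hα.lt_or_gt with h | h
      · refine ⟨-α, -β, by omega, ?_⟩
        rw [zpow_neg, zpow_neg, ← mul_inv, hαβ, inv_one]
      · exact ⟨α, β, h, hαβ⟩
    refine ⟨T β, ?_, α.toNat, by omega, ?_⟩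
    · exact (isUnit_T β).ne_zero
    · rw [sigma_T_int r hr σ hσ]
      congr 2
      rw [← zpow_natCast s, Int.toNat_of_nonneg hαpos.le]
      exact eq_inv_of_mul_eq_one_right hαβ
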